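/- Let α, β, γ : ℝ → ℝ be differentiable and let O(t) be the 3×3 orthogonal matrix with Euler angles α(t), β(t), γ(t): O = [[cosα·cosβ − sinα·sinβ·cosγ, −cosα·sinβ − sinα·cosβ·cosγ, sinα·sinγ], [sinα·cosβ + cosα·sinβ·cosγ, −sinα·sinβ + cosα·cosβ·cosγ, −cosα·sinγ], [sinβ·sinγ, cosβ·sinγ, cosγ]]. Define the angular velocity vector Ω(t) = (γ'·cosα + β'·sinα·sinγ, γ'·sinα − β'·cosα·sinγ, α' + β'·cosγ). Then for all t ∈ ℝ and x ∈ ℝ³, O'(t)·O(t)ᵀ·x = Ω(t) × x. Consequently, for e ≠ 0 the vector field A(t,x) = −(1/(2e))·O'(t)·O(t)ᵀ·x has spatial curl equal to H(t) := −(1/e)·Ω(t); i.e. the magnetic field H of the separable Pauli equation and the angular velocity Ω of the rotation of the separation coordinate system satisfy e·H(t) = −Ω(t). -/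

import Mathlib

open Matrix Real

/-- Partial derivative `∂_{x_b} f (x)` of a real-valued function on `ℝ³`. -/
noncomputable def pdR (b : Fin 3) (f : (Fin 3 → ℝ) → ℝ) (x : Fin 3 → ℝ) : ℝ :=
  fderiv ℝ f x (Pi.single b 1)

/-- The curl of a vector field on `ℝ³`. -/
noncomputable def curl3 (B : (Fin 3 → ℝ) → Fin 3 → ℝ) (x : Fin 3 → ℝ) : Fin 3 → ℝ :=
  ![pdR 1 (fun y => B y 2) x - pdR 2 (fun y => B y 1) x,
    pdR 2 (fun y => B y 0) x - pdR 0 (fun y => B y 2) x,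
    pdR 0 (fun y => B y 1) x - pdR 1 (fun y => B y 0) x]

/-- Cross product of two vectors in `ℝ³`. -/
def cross3 (a x : Fin 3 → ℝ) : Fin 3 → ℝ :=
  ![a 1 * x 2 - a 2 * x 1, a 2 * x 0 - a 0 * x 2, a 0 * x 1 - a 1 * x 0]

/-- The 3×3 orthogonal matrix with Euler angles `a`, `b`, `g`. -/
noncomputable def eulerO (a b g : ℝ) : Matrix (Fin 3) (Fin 3) ℝ :=
  !![cos a * cos b - sin a * sin b * cos g,
       -(cos a * sin b) - sin a * cos b * cos g,  sin a * sin g;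
     sin a * cos b + cos a * sin b * cos g,
       -(sin a * sin b) + cos a * cos b * cos g, -(cos a * sin g);
     sin b * sin g, cos b * sin g, cos g]

lemma pdR_aff (c u v : ℝ) (i j b : Fin 3) (x : Fin 3 → ℝ) :
    pdR b (fun y => c * (u * y i - v * y j)) x
      = c * (u * (Pi.single b 1 : Fin 3 → ℝ) i - v * (Pi.single b 1 : Fin 3 → ℝ) j) := by
  have hi : HasFDerivAt (fun y : Fin 3 → ℝ => y i)
      (ContinuousLinearMap.proj i : (Fin 3 → ℝ) →L[ℝ] ℝ) x :=
    (ContinuousLinearMap.proj i : (Fin 3 → ℝ) →L[ℝ] ℝ).hasFDerivAt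
  have hj : HasFDerivAt (fun y : Fin 3 → ℝ => y j)
      (ContinuousLinearMap.proj j : (Fin 3 → ℝ) →L[ℝ] ℝ) x :=
    (ContinuousLinearMap.proj j : (Fin 3 → ℝ) →L[ℝ] ℝ).hasFDerivAt
  have h : HasFDerivAt (fun y : Fin 3 → ℝ => c * (u * y i - v * y j))
      (c • (u • (ContinuousLinearMap.proj i : (Fin 3 → ℝ) →L[ℝ] ℝ)
        - v • (ContinuousLinearMap.proj j : (Fin 3 → ℝ) →L[ℝ] ℝ))) x :=
    ((hi.const_mul u).sub (hj.const_mul v)).const_mul c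
  rw [pdR, h.fderiv]
  simp [smul_eq_mul]

lemma curl3_smul_cross (c : ℝ) (a : Fin 3 → ℝ) (x : Fin 3 → ℝ) :
    curl3 (fun y => c • cross3 a y) x = (2 * c) • a := by
  funext i
  fin_cases i <;>
    simp only [curl3, Matrix.cons_val_zero, Matrix.cons_val_one, Matrix.head_cons,
      Matrix.cons_val_two, Matrix.tail_cons, Fin.reduceFinMk, Fin.isValue,
      Pi.smul_apply, smul_eq_mul]
  · rw [show (fun y : Fin 3 → ℝ => c * cross3 a y 2)
          = fun y : Fin 3 → ℝ => c * (a 0 * y 1 - a 1 * y 0) from rfl,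
        show (fun y : Fin 3 → ℝ => c * cross3 a y 1)
          = fun y : Fin 3 → ℝ => c * (a 2 * y 0 - a 0 * y 2) from rfl,
        pdR_aff, pdR_aff]
    simp [Pi.single_apply]
    ring
  · rw [show (fun y : Fin 3 → ℝ => c * cross3 a y 0)
          = fun y : Fin 3 → ℝ => c * (a 1 * y 2 - a 2 * y 1) from rfl,
        show (fun y : Fin 3 → ℝ => c * cross3 a y 2)
          = fun y : Fin 3 → ℝ => c * (a 0 * y 1 - a 1 * y 0) from rfl,
        pdR_aff, pdR_aff]
    simp [Pi.single_apply]
    ring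
  · rw [show (fun y : Fin 3 → ℝ => c * cross3 a y 1)
          = fun y : Fin 3 → ℝ => c * (a 2 * y 0 - a 0 * y 2) from rfl,
        show (fun y : Fin 3 → ℝ => c * cross3 a y 0)
          = fun y : Fin 3 → ℝ => c * (a 1 * y 2 - a 2 * y 1) from rfl,
        pdR_aff, pdR_aff]
    simp [Pi.single_apply]
    ring

/-- for the Euler-angle rotation matrix `O(t)` one has
`Ȯ(t)O(t)ᵀ x = Ω(t) × x` with `Ω` the angular velocity vector, and for `e ≠ 0`
the vector potential `A(t,x) = -(1/(2e)) Ȯ O ᵀ x` has spatial curl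
`H(t) = -(1/e)·Ω(t)`, i.e. `e·H = -Ω`. -/
theorem angular_velocity_eq_neg_eH
    (e : ℝ) (he : e ≠ 0) (α β γ : ℝ → ℝ)
    (hα : Differentiable ℝ α) (hβ : Differentiable ℝ β) (hγ : Differentiable ℝ γ) :
    (∀ (t : ℝ) (x : Fin 3 → ℝ),
      ((Matrix.of fun i j => deriv (fun s => eulerO (α s) (β s) (γ s) i j) t)
          * (eulerO (α t) (β t) (γ t))ᵀ).mulVec x
        = cross3
            ![deriv γ t * cos (α t) + deriv β t * sin (α t) * sin (γ t),
              deriv γ t * sin (α t) - deriv β t * cos (α t) * sin (γ t),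
              deriv α t + deriv β t * cos (γ t)] x)
    ∧ (∀ (t : ℝ) (x : Fin 3 → ℝ),
        curl3 (fun y =>
          (-(1 / (2 * e))) •
            ((Matrix.of fun i j => deriv (fun s => eulerO (α s) (β s) (γ s) i j) t)
              * (eulerO (α t) (β t) (γ t))ᵀ).mulVec y) x
        = (-(1 / e)) •
            ![deriv γ t * cos (α t) + deriv β t * sin (α t) * sin (γ t),
              deriv γ t * sin (α t) - deriv β t * cos (α t) * sin (γ t),
              deriv α t + deriv β t * cos (γ t)]) := by
  have part1 : ∀ (t : ℝ) (x : Fin 3 → ℝ),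
      ((Matrix.of fun i j => deriv (fun s => eulerO (α s) (β s) (γ s) i j) t)
          * (eulerO (α t) (β t) (γ t))ᵀ).mulVec x
        = cross3
            ![deriv γ t * cos (α t) + deriv β t * sin (α t) * sin (γ t),
              deriv γ t * sin (α t) - deriv β t * cos (α t) * sin (γ t),
              deriv α t + deriv β t * cos (γ t)] x := by
    intro t x
    have hsa := (hα t).hasDerivAt.sin
    have hca := (hα t).hasDerivAt.cos
    have hsb := (hβ t).hasDerivAt.sin
    have hcb := (hβ t).hasDerivAt.cos
    have hsg := (hγ t).hasDerivAt.sin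
    have hcg := (hγ t).hasDerivAt.cos
    have d00 : deriv (fun s => eulerO (α s) (β s) (γ s) 0 0) t
        = (-1) * cos (α t) * sin (β t) * deriv β t + (-1) * cos (α t) * sin (β t) * cos (γ t) * deriv α t + (-1) * sin (α t) * cos (β t) * deriv α t + (-1) * sin (α t) * cos (β t) * cos (γ t) * deriv β t + sin (α t) * sin (β t) * sin (γ t) * deriv γ t := by
      have hfun : (fun s => eulerO (α s) (β s) (γ s) 0 0)
          = (fun s => cos (α s) * cos (β s) - sin (α s) * sin (β s) * cos (γ s)) := by
        funext s; simp [eulerO]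
      rw [hfun]
      exact ((hca.mul hcb).sub ((hsa.mul hsb).mul hcg)).deriv.trans (by simp only [Pi.mul_apply]; ring)
    have d01 : deriv (fun s => eulerO (α s) (β s) (γ s) 0 1) t
        = (-1) * cos (α t) * cos (β t) * deriv β t + (-1) * cos (α t) * cos (β t) * cos (γ t) * deriv α t + sin (α t) * cos (β t) * sin (γ t) * deriv γ t + sin (α t) * sin (β t) * deriv α t + sin (α t) * sin (β t) * cos (γ t) * deriv β t := by
      have hfun : (fun s => eulerO (α s) (β s) (γ s) 0 1)
          = (fun s => -(cos (α s) * sin (β s)) - sin (α s) * cos (β s) * cos (γ s)) := by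
        funext s; simp [eulerO]
      rw [hfun]
      exact (((hca.mul hsb).neg).sub ((hsa.mul hcb).mul hcg)).deriv.trans (by simp only [Pi.mul_apply]; ring)
    have d02 : deriv (fun s => eulerO (α s) (β s) (γ s) 0 2) t
        = cos (α t) * sin (γ t) * deriv α t + sin (α t) * cos (γ t) * deriv γ t := by
      have hfun : (fun s => eulerO (α s) (β s) (γ s) 0 2)
          = (fun s => sin (α s) * sin (γ s)) := by
        funext s; simp [eulerO]
      rw [hfun]
      exact (hsa.mul hsg).deriv.trans (by ring)
    have d10 : deriv (fun s => eulerO (α s) (β s) (γ s) 1 0) t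
        = cos (α t) * cos (β t) * deriv α t + cos (α t) * cos (β t) * cos (γ t) * deriv β t + (-1) * cos (α t) * sin (β t) * sin (γ t) * deriv γ t + (-1) * sin (α t) * sin (β t) * deriv β t + (-1) * sin (α t) * sin (β t) * cos (γ t) * deriv α t := by
      have hfun : (fun s => eulerO (α s) (β s) (γ s) 1 0)
          = (fun s => sin (α s) * cos (β s) + cos (α s) * sin (β s) * cos (γ s)) := by
        funext s; simp [eulerO]
      rw [hfun]
      exact ((hsa.mul hcb).add ((hca.mul hsb).mul hcg)).deriv.trans (by simp only [Pi.mul_apply]; ring)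
    have d11 : deriv (fun s => eulerO (α s) (β s) (γ s) 1 1) t
        = (-1) * cos (α t) * cos (β t) * sin (γ t) * deriv γ t + (-1) * cos (α t) * sin (β t) * deriv α t + (-1) * cos (α t) * sin (β t) * cos (γ t) * deriv β t + (-1) * sin (α t) * cos (β t) * deriv β t + (-1) * sin (α t) * cos (β t) * cos (γ t) * deriv α t := by
      have hfun : (fun s => eulerO (α s) (β s) (γ s) 1 1)
          = (fun s => -(sin (α s) * sin (β s)) + cos (α s) * cos (β s) * cos (γ s)) := by
        funext s; simp [eulerO]
      rw [hfun]
      exact (((hsa.mul hsb).neg).add ((hca.mul hcb).mul hcg)).deriv.trans (by simp only [Pi.mul_apply]; ring)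
    have d12 : deriv (fun s => eulerO (α s) (β s) (γ s) 1 2) t
        = (-1) * cos (α t) * cos (γ t) * deriv γ t + sin (α t) * sin (γ t) * deriv α t := by
      have hfun : (fun s => eulerO (α s) (β s) (γ s) 1 2)
          = (fun s => -(cos (α s) * sin (γ s))) := by
        funext s; simp [eulerO]
      rw [hfun]
      exact ((hca.mul hsg).neg).deriv.trans (by ring)
    have d20 : deriv (fun s => eulerO (α s) (β s) (γ s) 2 0) t
        = cos (β t) * sin (γ t) * deriv β t + sin (β t) * cos (γ t) * deriv γ t := by
      have hfun : (fun s => eulerO (α s) (β s) (γ s) 2 0)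
          = (fun s => sin (β s) * sin (γ s)) := by
        funext s; simp [eulerO]
      rw [hfun]
      exact (hsb.mul hsg).deriv.trans (by ring)
    have d21 : deriv (fun s => eulerO (α s) (β s) (γ s) 2 1) t
        = cos (β t) * cos (γ t) * deriv γ t + (-1) * sin (β t) * sin (γ t) * deriv β t := by
      have hfun : (fun s => eulerO (α s) (β s) (γ s) 2 1)
          = (fun s => cos (β s) * sin (γ s)) := by
        funext s; simp [eulerO]
      rw [hfun]
      exact (hcb.mul hsg).deriv.trans (by ring)
    have d22 : deriv (fun s => eulerO (α s) (β s) (γ s) 2 2) t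
        = (-1) * sin (γ t) * deriv γ t := by
      have hfun : (fun s => eulerO (α s) (β s) (γ s) 2 2)
          = (fun s => cos (γ s)) := by
        funext s; simp [eulerO]
      rw [hfun]
      exact (hcg).deriv.trans (by ring)
    funext i
    fin_cases i <;>
      simp only [Matrix.mulVec, Matrix.mul_apply, Matrix.transpose_apply,
        Matrix.of_apply, dotProduct, Fin.sum_univ_three, cross3,
        Matrix.cons_val_zero, Matrix.cons_val_one, Matrix.head_cons,
        Matrix.cons_val_two, Matrix.tail_cons, Fin.reduceFinMk, Fin.isValue] <;>
      simp only [d00, d01, d02, d10, d11, d12, d20, d21, d22] <;>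
      simp only [eulerO, Matrix.cons_val_zero, Matrix.cons_val_one,
        Matrix.head_cons, Matrix.cons_val_two, Matrix.tail_cons,
        Matrix.of_apply, Matrix.cons_val', Matrix.empty_val',
        Matrix.cons_val_fin_one, Matrix.head_fin_const, Fin.isValue]
    · linear_combination (sin (γ t) * cos (γ t) * deriv γ t + (-1) * cos (β t) * cos (β t) * sin (γ t) * cos (γ t) * deriv γ t + (-1) * sin (β t) * sin (β t) * sin (γ t) * cos (γ t) * deriv γ t) * x 0 * (sin_sq_add_cos_sq (α t)) + ((-1) * sin (γ t) * cos (γ t) * deriv γ t + cos (α t) * cos (α t) * sin (γ t) * cos (γ t) * deriv γ t + (-1) * sin (α t) * cos (α t) * deriv α t + sin (α t) * cos (α t) * cos (γ t) * cos (γ t) * deriv α t) * x 0 * (sin_sq_add_cos_sq (β t)) + (sin (α t) * cos (α t) * deriv α t) * x 0 * (sin_sq_add_cos_sq (γ t)) + ((-1) * cos (β t) * cos (β t) * deriv α t + (-1) * cos (β t) * cos (β t) * cos (γ t) * deriv β t + (-1) * sin (β t) * sin (β t) * deriv α t + (-1) * sin (β t) * sin (β t) * cos (γ t) * deriv β t)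 * x 1 * (sin_sq_add_cos_sq (α t)) + ((-1) * deriv α t + (-1) * cos (γ t) * deriv β t + cos (α t) * cos (α t) * deriv α t + (-1) * cos (α t) * cos (α t) * cos (γ t) * cos (γ t) * deriv α t + sin (α t) * cos (α t) * sin (γ t) * cos (γ t) * deriv γ t) * x 1 * (sin_sq_add_cos_sq (β t)) + ((-1) * cos (α t) * cos (α t) * deriv α t) * x 1 * (sin_sq_add_cos_sq (γ t)) + ((0)) * x 2 * (sin_sq_add_cos_sq (α t)) + ((-1) * cos (α t) * sin (γ t) * deriv β t + (-1) * cos (α t) * sin (γ t) * cos (γ t) * deriv α t + sin (α t) * sin (γ t) * sin (γ t) * deriv γ t) * x 2 * (sin_sq_add_cos_sq (β t)) + (sin (α t) * deriv γ t) * x 2 * (sin_sq_add_cos_sq (γ t))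
    · linear_combination (sin (γ t) * sin (γ t) * deriv α t + cos (β t) * cos (β t) * cos (γ t) * deriv β t + cos (β t) * cos (β t) * cos (γ t) * cos (γ t) * deriv α t + sin (β t) * sin (β t) * cos (γ t) * deriv β t + sin (β t) * sin (β t) * cos (γ t) * cos (γ t) * deriv α t) * x 0 * (sin_sq_add_cos_sq (α t)) + (cos (γ t) * deriv β t + cos (γ t) * cos (γ t) * deriv α t + cos (α t) * cos (α t) * deriv α t + (-1) * cos (α t) * cos (α t) * cos (γ t) * cos (γ t) * deriv α t + sin (α t) * cos (α t) * sin (γ t) * cos (γ t) * deriv γ t) * x 0 * (sin_sq_add_cos_sq (β t)) + (deriv α t + (-1) * cos (α t) * cos (α t) * deriv α t) * x 0 * (sin_sq_add_cos_sq (γ t)) + ((0)) * x 1 * (sin_sq_add_cos_sq (α t)) + ((-1) * cos (α t) * cos (α t) * sin (γ t) * cos (γ t) * deriv γ t + sin (α t) * cos (α t) * deriv α t + (-1) * sin (α t) * cos (α t) * cos (γ t) * cos (γ t) * deriv α t) * x 1 * (sin_sq_add_cos_sq (β t)) + ((-1) * sin (α t) * cos (α t) * deriv α t) * x 1 * (sin_sq_add_cos_sq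 (γ t)) + ((0)) * x 2 * (sin_sq_add_cos_sq (α t)) + ((-1) * cos (α t) * sin (γ t) * sin (γ t) * deriv γ t + (-1) * sin (α t) * sin (γ t) * deriv β t + (-1) * sin (α t) * sin (γ t) * cos (γ t) * deriv α t) * x 2 * (sin_sq_add_cos_sq (β t)) + ((-1) * cos (α t) * deriv γ t) * x 2 * (sin_sq_add_cos_sq (γ t))
    · linear_combination ((0)) * x 0 * (sin_sq_add_cos_sq (α t)) + (cos (α t) * sin (γ t) * deriv β t + (-1) * sin (α t) * cos (γ t) * cos (γ t) * deriv γ t) * x 0 * (sin_sq_add_cos_sq (β t)) + ((-1) * sin (α t) * deriv γ t) * x 0 * (sin_sq_add_cos_sq (γ t)) + ((0)) * x 1 * (sin_sq_add_cos_sq (α t)) + (cos (α t) * cos (γ t) * cos (γ t) * deriv γ t + sin (α t) * sin (γ t) * deriv β t) * x 1 * (sin_sq_add_cos_sq (β t)) + (cos (α t) * deriv γ t) * x 1 * (sin_sq_add_cos_sq (γ t)) + ((0)) * x 2 * (sin_sq_add_cos_sq (α t)) + (sin (γ t) * cos (γ t) * deriv γ t) * x 2 * (sin_sq_add_cos_sq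 (β t)) + ((0)) * x 2 * (sin_sq_add_cos_sq (γ t))
  refine ⟨part1, fun t x => ?_⟩
  have hfun : (fun y : Fin 3 → ℝ =>
      (-(1 / (2 * e))) •
        ((Matrix.of fun i j => deriv (fun s => eulerO (α s) (β s) (γ s) i j) t)
          * (eulerO (α t) (β t) (γ t))ᵀ).mulVec y)
      = fun y : Fin 3 → ℝ => (-(1 / (2 * e))) • cross3
            ![deriv γ t * cos (α t) + deriv β t * sin (α t) * sin (γ t),
              deriv γ t * sin (α t) - deriv β t * cos (α t) * sin (γ t),
              deriv α t + deriv β t * cos (γ t)] y := by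
    funext y; rw [part1 t y]
  rw [hfun, curl3_smul_cross]
  congr 1
  field_simp
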